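/- (Kronecker-type statement) Let K be a number field and p = [x₀:…:xₙ] ∈ WP^n_w(K) with x_i ≠ 0 for some fixed i. Let ξ_i be a q_i-th root of x_i (so x_i = ξ_i^{q_i}). If for every j ≠ i the ratio x_j/ξ_i^{q_j} is zero or a root of unity, then wh(p) = 1. -/

import Mathlib

/-- Kronecker-type statement: let `p = [x₀:…:xₙ] ∈ WP^n_w(K)` with `x i₀ ≠ 0`, and let
`ξ` be a `q i₀`-th root of `x i₀` (so `x i₀ = ξ ^ q i₀`).  If for every `j ≠ i₀` the
ratio `x j / ξ ^ q j` is zero or a root of unity, then the weighted height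
`wh_K(p) = ∏_v max_j |x_j|_v^{n_v/q_j}` equals `1`. -/
theorem weighted_height_eq_one_of_roots_of_unity {K : Type*} [Field K] {V : Type*}
    (absv : V → AbsoluteValue K ℝ) (nv : V → ℕ) (hnv : ∀ v, 0 < nv v)
    (hfin : ∀ y : K, y ≠ 0 → {v | absv v y ≠ 1}.Finite)
    (hprod : ∀ y : K, y ≠ 0 → ∏ᶠ v, absv v y ^ nv v = 1)
    {n : ℕ} (q : Fin (n + 1) → ℕ) (hq : ∀ i, 0 < q i)
    (x : Fin (n + 1) → K) (i₀ : Fin (n + 1)) (hx : x i₀ ≠ 0)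
    (ξ : K) (hξ : x i₀ = ξ ^ q i₀)
    (hroots : ∀ j, j ≠ i₀ →
      x j / ξ ^ q j = 0 ∨ ∃ m : ℕ, 0 < m ∧ (x j / ξ ^ q j) ^ m = 1) :
    ∏ᶠ v, Finset.univ.sup' Finset.univ_nonempty
        (fun i => absv v (x i) ^ ((nv v : ℝ) / (q i : ℝ))) = 1 := by
  have hξ0 : ξ ≠ 0 := by
    intro h; apply hx; rw [hξ, h, zero_pow (hq i₀).ne']
  -- key pointwise computation
  have key : ∀ v, (Finset.univ.sup' Finset.univ_nonempty
      (fun i => absv v (x i) ^ ((nv v : ℝ) / (q i : ℝ)))) = absv v ξ ^ nv v := by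
    intro v
    have ha : (0:ℝ) ≤ absv v ξ := (absv v).nonneg _
    have hc : (0:ℝ) ≤ absv v ξ ^ nv v := pow_nonneg ha _
    -- computation: (|ξ|^(q i))^(nv/q i) = |ξ|^nv
    have comp : ∀ i : Fin (n+1),
        ((absv v ξ ^ q i : ℝ)) ^ ((nv v : ℝ) / (q i : ℝ)) = absv v ξ ^ nv v := by
      intro i
      have hqi : ((q i : ℝ)) ≠ 0 := Nat.cast_ne_zero.mpr (hq i).ne'
      rw [← Real.rpow_natCast (absv v ξ) (q i), ← Real.rpow_natCast (absv v ξ) (nv v),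
        ← Real.rpow_mul ha]
      congr 1
      field_simp
    -- value at each index
    have hval : ∀ i : Fin (n+1),
        absv v (x i) ^ ((nv v : ℝ) / (q i : ℝ)) = absv v ξ ^ nv v ∨
        absv v (x i) ^ ((nv v : ℝ) / (q i : ℝ)) = 0 := by
      intro i
      by_cases hi : i = i₀
      · left
        rw [hi, hξ, AbsoluteValue.map_pow, comp]
      · rcases hroots i hi with h | ⟨m, hm, hm1⟩
        · right
          have : x i = 0 := by
            field_simp at h; simpa using h
          rw [this, map_zero]
          exact Real.zero_rpow (by have h1 := hnv v; have h2 := hq i; positivity)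
        · left
          have hxi0 : x i / ξ ^ q i ≠ 0 := by
            intro h; rw [h, zero_pow hm.ne'] at hm1; exact zero_ne_one hm1
          have habs1 : absv v (x i / ξ ^ q i) = 1 := by
            have h1 : (absv v (x i / ξ ^ q i)) ^ m = 1 := by
              rw [← AbsoluteValue.map_pow, hm1, map_one]
            rcases (pow_eq_one_iff_cases).mp h1 with h | h | h
            · omega
            · exact h
            · exfalso
              have := (absv v).nonneg (x i / ξ ^ q i)
              rw [h.1] at this; linarith
          have : absv v (x i) = absv v ξ ^ q i := by
            have h2 := map_div₀ (absv v) (x i) (ξ ^ q i)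
            rw [habs1, AbsoluteValue.map_pow] at h2
            have hne : absv v ξ ^ q i ≠ 0 := pow_ne_zero _ ((absv v).ne_zero hξ0)
            exact (div_eq_one_iff_eq hne).mp h2.symm
          rw [this, comp]
    apply le_antisymm
    · apply Finset.sup'_le
      intro i _
      rcases hval i with h | h
      · rw [h]
      · rw [h]; exact hc
    · have := Finset.le_sup' (f := fun i => absv v (x i) ^ ((nv v : ℝ) / (q i : ℝ)))
        (Finset.mem_univ i₀)
      rcases hval i₀ with h | h
      · rw [h] at this; exact this
      · exfalso
        rw [hξ, AbsoluteValue.map_pow, comp] at h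
        have : absv v ξ ≠ 0 := (absv v).ne_zero hξ0
        exact (pow_ne_zero _ this) h
  rw [finprod_congr key]
  exact hprod ξ hξ0
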